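/- Let ⪯ be a qualitative probability order on 2^[n] and T ⊆ [n]. Then the initial segment Δ(⪯,T) = {X ⊆ [n] : X ≺ T} is strongly acyclic, i.e., its Winder existential ordering ≺_W has no cycles A_1 ≺_W A_2 ≺_W ⋯ ≺_W A_k ≺_W A_1 of any length k. -/

import Mathlib

/-- A qualitative probability order on `2^[n]`. -/
def IsQPO (n : ℕ) (r : Finset (Fin n) → Finset (Fin n) → Prop) : Prop :=
  (∀ A, r A A) ∧
  (∀ A B, r A B ∨ r B A) ∧
  (∀ A B C, r A B → r B C → r A C) ∧
  (∀ A, r ∅ A) ∧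
  (∀ A B C : Finset (Fin n), (A ∪ B) ∩ C = ∅ → (r A B ↔ r (A ∪ C) (B ∪ C)))

/-- The strict relation `A ≺ B`. -/
def strictR {n : ℕ} (r : Finset (Fin n) → Finset (Fin n) → Prop)
    (A B : Finset (Fin n)) : Prop := r A B ∧ ¬ r B A

/-- The initial segment `Δ(⪯,T) = {X ⊆ [n] : X ≺ T}`. -/
def initialSegment {n : ℕ} (r : Finset (Fin n) → Finset (Fin n) → Prop)
    (T : Finset (Fin n)) : Set (Finset (Fin n)) := {X | strictR r X T}

/-- The Winder desirability relation `A ≤_W B` for a family `Δ`. -/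
def WinderLE {n : ℕ} (Δ : Set (Finset (Fin n))) (A B : Finset (Fin n)) : Prop :=
  ∀ Z : Finset (Fin n), Z ∩ ((A \ B) ∪ (B \ A)) = ∅ →
    ((A \ B) ∪ Z ∉ Δ → (B \ A) ∪ Z ∉ Δ)

/-- The Winder existential ordering `A ≺_W B`. -/
def WinderLT {n : ℕ} (Δ : Set (Finset (Fin n))) (A B : Finset (Fin n)) : Prop :=
  ¬ WinderLE Δ B A

/-- `Δ` is strongly acyclic: no cycles `A_1 ≺_W ⋯ ≺_W A_k ≺_W A_1` of any length. -/
def StronglyAcyclic {n : ℕ} (Δ : Set (Finset (Fin n))) : Prop :=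
  ¬ ∃ (k : ℕ) (A : Fin (k + 1) → Finset (Fin n)),
      ∀ i : Fin (k + 1), WinderLT Δ (A i) (A (i + 1))

lemma winderLE_of_r {n : ℕ} {r : Finset (Fin n) → Finset (Fin n) → Prop}
    (hr : IsQPO n r) (T A B : Finset (Fin n)) (hAB : r A B) :
    WinderLE (initialSegment r T) A B := by
  obtain ⟨hrefl, hcomp, htrans, hbot, hfin⟩ := hr
  intro Z hZ hA'
  have hdisj : ((A \ B) ∪ (B \ A)) ∩ (A ∩ B) = ∅ := by
    ext x; simp only [Finset.mem_inter, Finset.mem_union, Finset.mem_sdiff,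
      Finset.notMem_empty, iff_false]; tauto
  have h1 : r (A \ B) (B \ A) := by
    have := hfin (A \ B) (B \ A) (A ∩ B) hdisj
    rw [Finset.sdiff_union_inter, Finset.inter_comm A B, Finset.sdiff_union_inter] at this
    exact this.mpr hAB
  have h2 : r ((A \ B) ∪ Z) ((B \ A) ∪ Z) := by
    have hd : ((A \ B) ∪ (B \ A)) ∩ Z = ∅ := by
      rw [Finset.inter_comm]; exact hZ
    exact (hfin _ _ Z hd).mp h1
  have hT : r T ((A \ B) ∪ Z) := by
    by_contra h
    rcases hcomp ((A \ B) ∪ Z) T with h' | h'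
    · exact hA' ⟨h', h⟩
    · exact h h'
  intro hB'
  exact hB'.2 (htrans _ _ _ hT h2)

open Fin.NatCast in
theorem stmt17 {n : ℕ} (r : Finset (Fin n) → Finset (Fin n) → Prop)
    (hr : IsQPO n r) (T : Finset (Fin n)) :
    StronglyAcyclic (initialSegment r T) := by
  rintro ⟨k, A, hA⟩
  have hstep : ∀ i : Fin (k+1), strictR r (A i) (A (i+1)) := by
    intro i
    have h := hA i
    rcases hr.2.1 (A i) (A (i+1)) with h1 | h1
    · refine ⟨h1, fun h2 => h (winderLE_of_r hr T _ _ h2)⟩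
    · exact absurd (winderLE_of_r hr T _ _ h1) h
  have key : ∀ m : ℕ, strictR r (A 0) (A ((m+1 : ℕ) : Fin (k+1))) := by
    intro m
    induction m with
    | zero =>
        have := hstep 0
        simpa using this
    | succ m ih =>
        have h2 := hstep ((m+1 : ℕ) : Fin (k+1))
        have hcast : (((m+1 : ℕ) : Fin (k+1)) + 1) = ((m+2 : ℕ) : Fin (k+1)) := by
          push_cast; rw [add_assoc, one_add_one_eq_two]
        rw [hcast] at h2
        exact ⟨hr.2.2.1 _ _ _ ih.1 h2.1, fun h => ih.2 (hr.2.2.1 _ _ _ h2.1 h)⟩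
  have := key k
  rw [show ((k+1 : ℕ) : Fin (k+1)) = 0 from Fin.natCast_self _] at this
  exact this.2 this.1
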